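/- arXiv:1201.4624 — 5 statements merged into one kernel-verified Lean document; each statement's English description precedes it below -/
import Mathlib

section
/- If real numbers x, y, z satisfy 2x + 2y ≤ 1, 3x + 2y + 6z ≤ 2, 2y + 3z ≤ 1, and x, y, z ≥ 0, then x + y + z ≤ 19/30, with equality attained at x = 1/5, y = 3/10, z = 2/15. -/
theorem stmt_2 :
    (∀ x y z : ℝ, 2 * x + 2 * y ≤ 1 → 3 * x + 2 * y + 6 * z ≤ 2 → 2 * y + 3 * z ≤ 1 →
      0 ≤ x → 0 ≤ y → 0 ≤ z → x + y + z ≤ 19 / 30) ∧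
    (2 * (1 / 5 : ℝ) + 2 * (3 / 10) ≤ 1 ∧ 3 * (1 / 5 : ℝ) + 2 * (3 / 10) + 6 * (2 / 15) ≤ 2 ∧
      2 * (3 / 10 : ℝ) + 3 * (2 / 15) ≤ 1 ∧
      (0 : ℝ) ≤ 1 / 5 ∧ (0 : ℝ) ≤ 3 / 10 ∧ (0 : ℝ) ≤ 2 / 15 ∧
      (1 / 5 : ℝ) + 3 / 10 + 2 / 15 = 19 / 30) := by
  constructor
  · intro x y z h1 h2 h3 hx hy hz
    linarith
  · norm_num
end

section
/- Let G be a finite 6-regular graph with vertex set V, and let S ⊆ V be a set such that every vertex in S has at most 3 neighbors in S. Then |S| ≤ (2/3)|V|. -/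
open scoped Classical

theorem stmt_3 {V : Type*} [Fintype V] (G : SimpleGraph V)
    (hreg : G.IsRegularOfDegree 6) (S : Finset V)
    (hS : ∀ v ∈ S, (S.filter (fun w => G.Adj v w)).card ≤ 3) :
    (S.card : ℝ) ≤ 2 / 3 * Fintype.card V := by
  have key : 9 * S.card ≤ 6 * Fintype.card V := by
    have hbound : ∀ v : V,
        3 * (if v ∈ S then 1 else 0) + (S.filter (fun w => G.Adj v w)).card ≤ 6 := by
      intro v
      by_cases hv : v ∈ S
      · simp only [hv, if_pos]
        have := hS v hv
        omega
      · simp only [hv, if_neg, not_false_iff, mul_zero, zero_add]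
        calc (S.filter (fun w => G.Adj v w)).card
            ≤ (Finset.univ.filter (fun w => G.Adj v w)).card :=
              Finset.card_le_card (Finset.filter_subset_filter _ (Finset.subset_univ S))
          _ = G.degree v := by
              rw [← SimpleGraph.neighborFinset_eq_filter, SimpleGraph.card_neighborFinset_eq_degree]
          _ = 6 := hreg v
    have hsum : ∑ v : V, (3 * (if v ∈ S then 1 else 0) +
        (S.filter (fun w => G.Adj v w)).card) ≤ ∑ _v : V, 6 :=
      Finset.sum_le_sum fun v _ => hbound v
    rw [Finset.sum_add_distrib, ← Finset.mul_sum] at hsum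
    have h1 : ∑ v : V, (if v ∈ S then 1 else 0) = S.card := by
      simp [Finset.sum_ite_mem]
    have h2 : ∑ v : V, (S.filter (fun w => G.Adj v w)).card = 6 * S.card := by
      have : ∀ v : V, (S.filter (fun w => G.Adj v w)).card
          = ∑ w ∈ S, (if G.Adj v w then 1 else 0) := by
        intro v; rw [Finset.card_filter]
      simp_rw [this]
      rw [Finset.sum_comm]
      have : ∀ w ∈ S, ∑ v : V, (if G.Adj v w then 1 else 0) = 6 := by
        intro w _
        have : ∑ v : V, (if G.Adj v w then 1 else 0)
            = (Finset.univ.filter (fun v => G.Adj v w)).card := by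
          rw [Finset.card_filter]
        rw [this]
        have : Finset.univ.filter (fun v => G.Adj v w) = G.neighborFinset w := by
          ext v; simp [SimpleGraph.adj_comm]
        rw [this, SimpleGraph.card_neighborFinset_eq_degree, hreg w]
      rw [Finset.sum_congr rfl this, Finset.sum_const, smul_eq_mul, mul_comm]
    rw [h1, h2, Finset.sum_const, Finset.card_univ, smul_eq_mul] at hsum
    omega
  have := (Nat.cast_le (α := ℝ)).mpr key
  push_cast at this
  linarith
end

section
/- Let G be a finite 3-regular graph with vertex set V, and let S ⊆ V be a set such that every vertex in S has at most 1 neighbor in S. Then |S| ≤ (3/5)|V|. -/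
open scoped Classical

theorem stmt_4 {V : Type*} [Fintype V] (G : SimpleGraph V)
    (hreg : G.IsRegularOfDegree 3) (S : Finset V)
    (hS : ∀ v ∈ S, (S.filter (fun w => G.Adj v w)).card ≤ 1) :
    (S.card : ℝ) ≤ 3 / 5 * Fintype.card V := by
  have hdeg : ∀ v, (Finset.univ.filter (fun w => G.Adj v w)).card = 3 := by
    intro v
    have := hreg v
    rw [← this, ← G.card_neighborFinset_eq_degree]
    congr 1; ext w; simp
  -- double counting: ∑ v, |N(v) ∩ S| = 3 * |S|
  have hdc : ∑ v : V, (S.filter (fun w => G.Adj v w)).card = 3 * S.card := by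
    have : ∑ v : V, (S.filter (fun w => G.Adj v w)).card
        = ∑ w ∈ S, (Finset.univ.filter (fun v => G.Adj v w)).card := by
      simp only [Finset.card_filter]
      rw [Finset.sum_comm]
    rw [this]
    have : ∀ w ∈ S, (Finset.univ.filter (fun v => G.Adj v w)).card = 3 := by
      intro w _
      have := hdeg w
      simpa [G.adj_comm] using this
    rw [Finset.sum_congr rfl this]
    simp [mul_comm]
  -- pointwise bound
  have hpt : ∀ v : V, (if v ∈ S then 2 else 0) + (S.filter (fun w => G.Adj v w)).card ≤ 3 := by
    intro v
    by_cases h : v ∈ S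
    · simp only [h, if_pos]
      have := hS v h
      omega
    · simp only [h, if_neg, not_false_iff, zero_add]
      calc (S.filter (fun w => G.Adj v w)).card
          ≤ (Finset.univ.filter (fun w => G.Adj v w)).card :=
            Finset.card_le_card (Finset.filter_subset_filter _ (Finset.subset_univ S))
        _ = 3 := hdeg v
  have hsum : ∑ v : V, ((if v ∈ S then 2 else 0) + (S.filter (fun w => G.Adj v w)).card)
      ≤ 3 * Fintype.card V := by
    calc ∑ v : V, ((if v ∈ S then 2 else 0) + (S.filter (fun w => G.Adj v w)).card)
        ≤ ∑ _v : V, 3 := Finset.sum_le_sum (fun v _ => hpt v)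
      _ = 3 * Fintype.card V := by simp [mul_comm]
  have hlhs : ∑ v : V, ((if v ∈ S then 2 else 0) + (S.filter (fun w => G.Adj v w)).card)
      = 5 * S.card := by
    rw [Finset.sum_add_distrib, hdc, Finset.sum_ite_mem, Finset.univ_inter, Finset.sum_const]
    ring
  have key : 5 * S.card ≤ 3 * Fintype.card V := by rw [← hlhs]; exact hsum
  have : (5 : ℝ) * S.card ≤ 3 * Fintype.card V := by exact_mod_cast key
  linarith
end

section
/- Let G be a finite graph whose vertex set is partitioned into a set Q of 'square' vertices of degree 4 and a set T of 'triangle' vertices of degree 3, with |T| = 2|Q|, such that every edge incident to a square vertex joins it to exactly 2 square vertices and 2 triangle vertices (each square vertex has 2 square neighbors and 2 triangle neighbors), and every triangle vertex has exactly 1 square neighbor and 2 triangle neighbors. If S is a set of vertices in which every square vertex of S has at most 2 neighbors in S and every triangle vertex of S has at most 1 neighbor in S, then |S| ≤ (13/21)·(|Q| + |T|). -/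
open scoped Classical

theorem stmt_8 {V : Type*} [Fintype V] (G : SimpleGraph V) (Q T : Finset V)
    (hpart : Q ∪ T = Finset.univ) (hdisj : Disjoint Q T)
    (hcard : T.card = 2 * Q.card)
    (hQ : ∀ v ∈ Q, (Q.filter (fun w => G.Adj v w)).card = 2 ∧
                   (T.filter (fun w => G.Adj v w)).card = 2)
    (hT : ∀ v ∈ T, (Q.filter (fun w => G.Adj v w)).card = 1 ∧
                   (T.filter (fun w => G.Adj v w)).card = 2)
    (S : Finset V)
    (hSQ : ∀ v ∈ S, v ∈ Q → (S.filter (fun w => G.Adj v w)).card ≤ 2)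
    (hST : ∀ v ∈ S, v ∈ T → (S.filter (fun w => G.Adj v w)).card ≤ 1) :
    (S.card : ℝ) ≤ 13 / 21 * ((Q.card : ℝ) + T.card) := by
  classical
  set a := (S ∩ Q).card with ha
  set b := (S ∩ T).card with hb
  have hSQdisj : Disjoint (S ∩ Q) (S ∩ T) :=
    hdisj.mono Finset.inter_subset_right Finset.inter_subset_right
  have hSeq : S = (S ∩ Q) ∪ (S ∩ T) := by
    rw [← Finset.inter_union_distrib_left, hpart, Finset.inter_univ]
  have hSsplit : S.card = a + b := by
    rw [ha, hb, ← Finset.card_union_of_disjoint hSQdisj, ← hSeq]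
  -- double counting: swap order of summation
  have swap : ∀ A : Finset V, ∑ v ∈ A, (S.filter (fun w => G.Adj v w)).card
      = ∑ u ∈ S, (A.filter (fun w => G.Adj u w)).card := by
    intro A
    simp only [Finset.card_filter]
    rw [Finset.sum_comm]
    refine Finset.sum_congr rfl fun u _ => Finset.sum_congr rfl fun v _ => ?_
    simp [G.adj_comm]
  have hsumQ : ∑ u ∈ S, (Q.filter (fun w => G.Adj u w)).card = 2 * a + b := by
    rw [hSeq, Finset.sum_union hSQdisj]
    have h1 : ∑ u ∈ S ∩ Q, (Q.filter (fun w => G.Adj u w)).card = 2 * a := by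
      rw [Finset.sum_congr rfl fun u hu => (hQ u (Finset.mem_inter.mp hu).2).1,
        Finset.sum_const, smul_eq_mul, mul_comm]
    have h2 : ∑ u ∈ S ∩ T, (Q.filter (fun w => G.Adj u w)).card = b := by
      rw [Finset.sum_congr rfl fun u hu => (hT u (Finset.mem_inter.mp hu).2).1,
        Finset.sum_const, smul_eq_mul, mul_one]
    omega
  have hsumT : ∑ u ∈ S, (T.filter (fun w => G.Adj u w)).card = 2 * a + 2 * b := by
    rw [hSeq, Finset.sum_union hSQdisj]
    have h1 : ∑ u ∈ S ∩ Q, (T.filter (fun w => G.Adj u w)).card = 2 * a := by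
      rw [Finset.sum_congr rfl fun u hu => (hQ u (Finset.mem_inter.mp hu).2).2,
        Finset.sum_const, smul_eq_mul, mul_comm]
    have h2 : ∑ u ∈ S ∩ T, (T.filter (fun w => G.Adj u w)).card = 2 * b := by
      rw [Finset.sum_congr rfl fun u hu => (hT u (Finset.mem_inter.mp hu).2).2,
        Finset.sum_const, smul_eq_mul, mul_comm]
    omega
  -- indicator sums
  have hindQ : ∑ v ∈ Q, (if v ∈ S then 2 else 0) = 2 * a := by
    rw [Finset.sum_ite_mem, Finset.sum_const, smul_eq_mul, Finset.inter_comm, ← ha, mul_comm]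
  have hindT : ∑ v ∈ T, (if v ∈ S then 2 else 0) = 2 * b := by
    rw [Finset.sum_ite_mem, Finset.sum_const, smul_eq_mul, Finset.inter_comm, ← hb, mul_comm]
  -- vertex inequalities summed over Q
  have key1 : 4 * a + b ≤ 4 * Q.card := by
    have hv : ∀ v ∈ Q,
        (if v ∈ S then 2 else 0) + (S.filter (fun w => G.Adj v w)).card ≤ 4 := by
      intro v hv
      by_cases hvS : v ∈ S
      · have := hSQ v hvS hv
        simp only [hvS, if_true]
        omega
      · simp only [hvS, if_false, zero_add]
        have hsub : S.filter (fun w => G.Adj v w) ⊆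
            Q.filter (fun w => G.Adj v w) ∪ T.filter (fun w => G.Adj v w) := by
          rw [← Finset.filter_union, hpart]
          exact Finset.filter_subset_filter _ (Finset.subset_univ S)
        have h1 := Finset.card_le_card hsub
        have h2 := Finset.card_union_le (Q.filter (fun w => G.Adj v w))
          (T.filter (fun w => G.Adj v w))
        have h3 := (hQ v hv).1
        have h4 := (hQ v hv).2
        omega
    have hsum := Finset.sum_le_sum hv
    rw [Finset.sum_add_distrib, hindQ, swap, hsumQ, Finset.sum_const, smul_eq_mul] at hsum
    omega
  -- vertex inequalities summed over T
  have key2 : 2 * a + 4 * b ≤ 3 * T.card := by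
    have hv : ∀ v ∈ T,
        (if v ∈ S then 2 else 0) + (S.filter (fun w => G.Adj v w)).card ≤ 3 := by
      intro v hv
      by_cases hvS : v ∈ S
      · have := hST v hvS hv
        simp only [hvS, if_true]
        omega
      · simp only [hvS, if_false, zero_add]
        have hsub : S.filter (fun w => G.Adj v w) ⊆
            Q.filter (fun w => G.Adj v w) ∪ T.filter (fun w => G.Adj v w) := by
          rw [← Finset.filter_union, hpart]
          exact Finset.filter_subset_filter _ (Finset.subset_univ S)
        have h1 := Finset.card_le_card hsub
        have h2 := Finset.card_union_le (Q.filter (fun w => G.Adj v w))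
          (T.filter (fun w => G.Adj v w))
        have h3 := (hT v hv).1
        have h4 := (hT v hv).2
        omega
    have hsum := Finset.sum_le_sum hv
    rw [Finset.sum_add_distrib, hindT, swap, hsumT, Finset.sum_const, smul_eq_mul] at hsum
    omega
  -- combine over ℝ
  have r1 : (4 * a + b : ℝ) ≤ 4 * Q.card := by exact_mod_cast key1
  have r2 : (2 * a + 4 * b : ℝ) ≤ 3 * T.card := by exact_mod_cast key2
  have rS : (S.card : ℝ) = a + b := by exact_mod_cast hSsplit
  have rT : (T.card : ℝ) = 2 * Q.card := by exact_mod_cast hcard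
  rw [rS]
  linarith
end

section
/- Let G be a finite graph whose vertex set is partitioned into hexagon vertices H of degree 6 and triangle vertices T of degree 3, with |T| = 2|H|, such that every hexagon vertex has 6 triangle neighbors and every triangle vertex has 3 hexagon neighbors. If S is a set of vertices such that every hexagon vertex in S has at most 3 neighbors in S and every triangle vertex in S has at most 1 neighbor in S, then |S| ≤ (2/3)(|H| + |T|). -/
open scoped Classical

private lemma double_count {V : Type*} (A B : Finset V) (R : V → V → Prop)
    [DecidableRel R] :
    ∑ v ∈ A, (B.filter (fun w => R v w)).card
      = ∑ w ∈ B, (A.filter (fun v => R v w)).card := by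
  simp_rw [Finset.card_filter]
  exact Finset.sum_comm

theorem stmt_9 {V : Type*} [Fintype V] (G : SimpleGraph V) (H T : Finset V)
    (hpart : H ∪ T = Finset.univ) (hdisj : Disjoint H T)
    (hcard : T.card = 2 * H.card)
    (hH : ∀ v ∈ H, (T.filter (fun w => G.Adj v w)).card = 6 ∧
                   (H.filter (fun w => G.Adj v w)).card = 0)
    (hT : ∀ v ∈ T, (H.filter (fun w => G.Adj v w)).card = 3 ∧
                   (T.filter (fun w => G.Adj v w)).card = 0)
    (S : Finset V)
    (hSH : ∀ v ∈ S, v ∈ H → (S.filter (fun w => G.Adj v w)).card ≤ 3)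
    (hST : ∀ v ∈ S, v ∈ T → (S.filter (fun w => G.Adj v w)).card ≤ 1) :
    (S.card : ℝ) ≤ 2 / 3 * ((H.card : ℝ) + T.card) := by
  -- split S
  have hSsplit : S.card = (S ∩ H).card + (S ∩ T).card := by
    rw [← Finset.card_union_of_disjoint, ← Finset.inter_union_distrib_left,
      hpart, Finset.inter_univ]
    exact Finset.disjoint_left.2 fun x hx hy =>
      (Finset.disjoint_left.1 hdisj) (Finset.mem_of_mem_inter_right hx)
        (Finset.mem_of_mem_inter_right hy)
  -- each vertex of S ∩ H has ≥ 3 neighbors in T \ S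
  have key1 : ∀ v ∈ S ∩ H, 3 ≤ ((T \ S).filter (fun w => G.Adj v w)).card := by
    intro v hv
    have hvS := Finset.mem_of_mem_inter_left hv
    have hvH := Finset.mem_of_mem_inter_right hv
    have h6 := (hH v hvH).1
    have hsub : T.filter (fun w => G.Adj v w) ⊆
        (T \ S).filter (fun w => G.Adj v w) ∪ S.filter (fun w => G.Adj v w) := by
      intro x hx
      simp only [Finset.mem_filter, Finset.mem_union, Finset.mem_sdiff] at hx ⊢
      tauto
    have := (Finset.card_le_card hsub).trans (Finset.card_union_le _ _)
    have h3 := hSH v hvS hvH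
    omega
  -- each vertex of T \ S has ≤ 3 neighbors in S ∩ H
  have key2 : ∀ w ∈ T \ S, ((S ∩ H).filter (fun v => G.Adj v w)).card ≤ 3 := by
    intro w hw
    have hwT := (Finset.mem_sdiff.1 hw).1
    have := (hT w hwT).1
    calc ((S ∩ H).filter (fun v => G.Adj v w)).card
        ≤ (H.filter (fun v => G.Adj w v)).card := by
          apply Finset.card_le_card
          intro x hx
          simp only [Finset.mem_filter, Finset.mem_inter] at hx ⊢
          exact ⟨hx.1.2, hx.2.symm⟩
      _ = 3 := this
  -- double counting
  have hsum : 3 * (S ∩ H).card ≤ 3 * (T \ S).card := by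
    calc 3 * (S ∩ H).card = ∑ _v ∈ S ∩ H, 3 := by
          rw [Finset.sum_const, smul_eq_mul, mul_comm]
      _ ≤ ∑ v ∈ S ∩ H, ((T \ S).filter (fun w => G.Adj v w)).card :=
          Finset.sum_le_sum key1
      _ = ∑ w ∈ T \ S, ((S ∩ H).filter (fun v => G.Adj v w)).card :=
          double_count _ _ _
      _ ≤ ∑ _w ∈ T \ S, 3 := Finset.sum_le_sum key2
      _ = 3 * (T \ S).card := by rw [Finset.sum_const, smul_eq_mul, mul_comm]
  have hTsplit : (T ∩ S).card + (T \ S).card = T.card :=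
    Finset.card_inter_add_card_sdiff T S
  have hcomm : (S ∩ T).card = (T ∩ S).card := by rw [Finset.inter_comm]
  have hfinal : S.card ≤ 2 * H.card := by omega
  have := (Nat.cast_le (α := ℝ)).2 hfinal
  push_cast at this ⊢
  rw [hcard]
  push_cast
  linarith
end
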